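/- If π' is any Y-deflation of a permutation π, then the Y-profile π^Y is involved in π' (i.e., π^Y ≤ π' in the pattern order). -/

import Mathlib

/-- Pattern involvement: `σ` occurs as a pattern in `π`. -/
def Involves {k n : ℕ} (σ : Equiv.Perm (Fin k)) (π : Equiv.Perm (Fin n)) : Prop :=
  ∃ f : Fin k → Fin n, StrictMono f ∧ ∀ a b : Fin k, σ a < σ b ↔ π (f a) < π (f b)

/-- Finite permutations of arbitrary length. -/
abbrev PermS := Σ n : ℕ, Equiv.Perm (Fin n)

/-- Pattern involvement on permutations of arbitrary length. -/
def SInvolves (s t : PermS) : Prop := Involves s.2 t.2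

/-- A permutation class: a set of permutations closed downwards under involvement. -/
def IsPermClass (X : Set PermS) : Prop :=
  ∀ s t : PermS, SInvolves s t → t ∈ X → s ∈ X

/-- A set of positions is consecutive (order-convex). -/
def Consec {n : ℕ} (s : Finset (Fin n)) : Prop :=
  ∀ ⦃a b c : Fin n⦄, a ∈ s → c ∈ s → a ≤ b → b ≤ c → b ∈ s

/-- An interval (block) of a permutation: consecutive positions with consecutive values. -/
def IsInterval {n : ℕ} (π : Equiv.Perm (Fin n)) (s : Finset (Fin n)) : Prop :=
  Consec s ∧ Consec (s.image π)

/-- `α` is the pattern of `π` on the set of positions `s`. -/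
def IsPatternOf {k n : ℕ} (α : Equiv.Perm (Fin k)) (π : Equiv.Perm (Fin n))
    (s : Finset (Fin n)) : Prop :=
  ∃ f : Fin k → Fin n, StrictMono f ∧ (∀ i, f i ∈ s) ∧ (∀ x ∈ s, ∃ i, f i = x) ∧
    ∀ a b : Fin k, α a < α b ↔ π (f a) < π (f b)

/-- `π` is the inflation of `σ` with the given (nonempty, interval) blocks. -/
def IsInflation {n m : ℕ} (π : Equiv.Perm (Fin n)) (σ : Equiv.Perm (Fin m))
    (blocks : Fin m → Finset (Fin n)) : Prop :=
  (∀ i, (blocks i).Nonempty) ∧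
  (∀ i, IsInterval π (blocks i)) ∧
  (∀ x : Fin n, ∃! i, x ∈ blocks i) ∧
  (∀ i j : Fin m, i < j → ∀ x ∈ blocks i, ∀ y ∈ blocks j, x < y) ∧
  (∀ i j : Fin m, i ≠ j → ∀ x ∈ blocks i, ∀ y ∈ blocks j, (σ i < σ j ↔ π x < π y))

/-- `π'` is a `Y`-deflation of `π`: `π = π'[α₁,…,α_k]` with all `αᵢ ∈ Y`. -/
def IsYDeflation (Y : Set PermS) {m n : ℕ} (π' : Equiv.Perm (Fin m))
    (π : Equiv.Perm (Fin n)) : Prop :=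
  ∃ blocks : Fin m → Finset (Fin n), IsInflation π π' blocks ∧
    ∀ i, ∃ (k : ℕ) (α : Equiv.Perm (Fin k)), (⟨k, α⟩ : PermS) ∈ Y ∧ IsPatternOf α π (blocks i)

/-- Membership in the wreath product `X ≀ Y`. -/
def InWreath (X Y : Set PermS) {n : ℕ} (π : Equiv.Perm (Fin n)) : Prop :=
  ∃ (m : ℕ) (σ : Equiv.Perm (Fin m)), (⟨m, σ⟩ : PermS) ∈ X ∧ IsYDeflation Y σ π

/-- The wreath product `X ≀ Y` as a set of permutations. -/
def WreathSet (X Y : Set PermS) : Set PermS := {s : PermS | InWreath X Y s.2}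

/-- The class of permutations avoiding every pattern in `B`. -/
def Av (B : Set PermS) : Set PermS := {s : PermS | ∀ b ∈ B, ¬ SInvolves b s}

/-- The basis of a class: minimal permutations not in it. -/
def PermBasis (C : Set PermS) : Set PermS :=
  {s : PermS | s ∉ C ∧ ∀ t : PermS, SInvolves t s → t ≠ s → t ∈ C}

/-- A permutation is simple if its only intervals are trivial. -/
def IsSimple {n : ℕ} (π : Equiv.Perm (Fin n)) : Prop :=
  ∀ s : Finset (Fin n), IsInterval π s → s.card ≤ 1 ∨ s = Finset.univ

/-- Sum decomposable: a proper nonempty initial block with the smallest values. -/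
def SumDecomposable {n : ℕ} (π : Equiv.Perm (Fin n)) : Prop :=
  ∃ s : Finset (Fin n), s.Nonempty ∧ s ≠ Finset.univ ∧
    ∀ x ∈ s, ∀ y : Fin n, y ∉ s → x < y ∧ π x < π y

/-- Skew decomposable: a proper nonempty initial block with the largest values. -/
def SkewDecomposable {n : ℕ} (π : Equiv.Perm (Fin n)) : Prop :=
  ∃ s : Finset (Fin n), s.Nonempty ∧ s ≠ Finset.univ ∧
    ∀ x ∈ s, ∀ y : Fin n, y ∉ s → x < y ∧ π y < π x

-- Auxiliary lemmas


lemma consec_sdiff {n : ℕ} {A B : Finset (Fin n)} (hA : Consec A) (hB : Consec B)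
    {w : Fin n} (hwB : w ∈ B) (hwA : w ∉ A) : Consec (A \ B) := by
  intro a b c ha hc hab hbc
  rw [Finset.mem_sdiff] at ha hc ⊢
  refine ⟨hA ha.1 hc.1 hab hbc, fun hbB => ?_⟩
  rcases le_or_gt a w with h1 | h1
  · rcases le_or_gt w c with h2 | h2
    · exact hwA (hA ha.1 hc.1 h1 h2)
    · exact hc.2 (hB hbB hwB hbc h2.le)
  · exact ha.2 (hB hwB hbB h1.le hab)

lemma isInterval_sdiff {n : ℕ} (π : Equiv.Perm (Fin n)) {A B : Finset (Fin n)}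
    (hA : IsInterval π A) (hB : IsInterval π B) {w : Fin n} (hwB : w ∈ B) (hwA : w ∉ A) :
    IsInterval π (A \ B) := by
  classical
  constructor
  · exact consec_sdiff hA.1 hB.1 hwB hwA
  · rw [Finset.image_sdiff _ _ π.injective]
    refine consec_sdiff hA.2 hB.2 (Finset.mem_image_of_mem π hwB) (fun h => hwA ?_)
    obtain ⟨x, hx, hπ⟩ := Finset.mem_image.mp h
    rwa [π.injective hπ] at hx

lemma consec_sep {n : ℕ} {S T : Finset (Fin n)} (hS : Consec S) (hT : Consec T)
    (hdisj : ∀ x, x ∈ S → x ∉ T) :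
    (∀ x ∈ S, ∀ y ∈ T, x < y) ∨ (∀ x ∈ S, ∀ y ∈ T, y < x) := by
  by_cases h : ∀ x ∈ S, ∀ y ∈ T, x < y
  · exact Or.inl h
  push_neg at h
  obtain ⟨x0, hx0, y0, hy0, hle⟩ := h
  right; intro x hx y hy
  by_contra hxy
  push_neg at hxy
  rcases le_or_gt x y0 with h1 | h1
  · exact hdisj y0 (hS hx hx0 h1 hle) hy0
  · exact hdisj x hx (hT hy0 hy h1.le hxy)

lemma exists_rank_perm {r n : ℕ} (key : Fin r → Fin n) (hinj : Function.Injective key) :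
    ∃ β : Equiv.Perm (Fin r), ∀ a b, β a < β b ↔ key a < key b := by
  classical
  have hcard : (Finset.univ.image key).card = r := by
    rw [Finset.card_image_of_injective _ hinj, Finset.card_univ, Fintype.card_fin]
  let e := (Finset.univ.image key).orderIsoOfFin hcard
  let g : Fin r → Fin r := fun a => e.symm ⟨key a, by simp⟩
  have hg : Function.Injective g := by
    intro a b hab
    have h2 := e.symm.injective hab
    exact hinj (congrArg Subtype.val h2)
  refine ⟨Equiv.ofBijective g (Finite.injective_iff_bijective.mp hg), fun a b => ?_⟩
  show g a < g b ↔ _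
  rw [OrderIso.lt_iff_lt, Subtype.mk_lt_mk]

lemma exists_pattern {n : ℕ} (π : Equiv.Perm (Fin n)) (S : Finset (Fin n)) :
    ∃ (k : ℕ) (β : Equiv.Perm (Fin k)), IsPatternOf β π S := by
  classical
  set e := S.orderIsoOfFin rfl with he
  have hinj : Function.Injective (fun a : Fin S.card => π (e a : Fin n)) := by
    intro a b hab
    exact e.injective (Subtype.ext (π.injective hab))
  obtain ⟨β, hβ⟩ := exists_rank_perm _ hinj
  refine ⟨S.card, β, fun a => (e a : Fin n), ?_, fun i => (e i).2, fun x hx => ⟨e.symm ⟨x, hx⟩, by simp⟩, fun a b => hβ a b⟩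
  intro a b hab
  exact Subtype.coe_lt_coe.mpr (e.strictMono hab)

lemma pattern_mono {Y : Set PermS} (hY : IsPermClass Y) {n kT : ℕ} (π : Equiv.Perm (Fin n))
    {α : Equiv.Perm (Fin kT)} {S T : Finset (Fin n)} (hST : S ⊆ T)
    (hT : IsPatternOf α π T) (hTY : (⟨kT, α⟩ : PermS) ∈ Y) :
    ∃ (k : ℕ) (β : Equiv.Perm (Fin k)), (⟨k, β⟩ : PermS) ∈ Y ∧ IsPatternOf β π S := by
  obtain ⟨k, β, hβ⟩ := exists_pattern π S
  refine ⟨k, β, ?_, hβ⟩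
  obtain ⟨f, hfm, hfS, _, hfiff⟩ := hβ
  obtain ⟨g, hgm, hgT, hgsurj, hgiff⟩ := hT
  refine hY ⟨k, β⟩ ⟨kT, α⟩ ?_ hTY
  choose h hh using fun a => hgsurj (f a) (hST (hfS a))
  refine ⟨h, ?_, ?_⟩
  · intro a b hab
    have : g (h a) < g (h b) := by rw [hh, hh]; exact hfm hab
    exact hgm.lt_iff_lt.mp this
  · intro a b
    rw [hfiff, ← hh a, ← hh b]
    exact (hgiff _ _).symm

lemma exists_perm_of_list (Y : Set PermS) {n : ℕ} (π : Equiv.Perm (Fin n))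
    (L : List (Finset (Fin n)))
    (hne : ∀ S ∈ L, S.Nonempty)
    (hint : ∀ S ∈ L, IsInterval π S)
    (hpat : ∀ S ∈ L, ∃ (k : ℕ) (α : Equiv.Perm (Fin k)), (⟨k, α⟩ : PermS) ∈ Y ∧ IsPatternOf α π S)
    (hord : L.Pairwise (fun S T => ∀ x ∈ S, ∀ y ∈ T, x < y))
    (hcov : ∀ x : Fin n, ∃ S ∈ L, x ∈ S) :
    ∃ σ : Equiv.Perm (Fin L.length), IsYDeflation Y σ π := by
  classical
  set D : Fin L.length → Finset (Fin n) := fun t => L.get t with hD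
  have hpw : ∀ (i j : Fin L.length), i < j → ∀ x ∈ D i, ∀ y ∈ D j, x < y :=
    List.pairwise_iff_get.mp hord
  have hdisj : ∀ (t s : Fin L.length), t ≠ s → ∀ x, x ∈ D t → x ∉ D s := by
    intro t s hts x hxt hxs
    rcases lt_or_gt_of_ne hts with h | h
    · exact lt_irrefl x (hpw t s h x hxt x hxs)
    · exact lt_irrefl x (hpw s t h x hxs x hxt)
  have hmemL : ∀ t : Fin L.length, D t ∈ L := fun t => List.get_mem L t
  have hDne : ∀ t, (D t).Nonempty := fun t => hne _ (hmemL t)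
  have hDint : ∀ t, IsInterval π (D t) := fun t => hint _ (hmemL t)
  have hkeyinj : Function.Injective (fun t : Fin L.length => π ((D t).min' (hDne t))) := by
    intro t s h
    have h2 := π.injective h
    by_contra hne2
    have hx : (D t).min' (hDne t) ∈ D s := by
      rw [show (D t).min' (hDne t) = (D s).min' (hDne s) from h2]
      exact Finset.min'_mem _ _
    exact hdisj t s hne2 _ (Finset.min'_mem _ _) hx
  obtain ⟨σ, hσ⟩ := exists_rank_perm _ hkeyinj
  have hsep : ∀ (t s : Fin L.length), t ≠ s →
      (∀ x ∈ D t, ∀ y ∈ D s, π x < π y) ∨ (∀ x ∈ D t, ∀ y ∈ D s, π y < π x) := by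
    intro t s hts
    have hd : ∀ z, z ∈ (D t).image π → z ∉ (D s).image π := by
      intro z hzt hzs
      obtain ⟨x, hx, rfl⟩ := Finset.mem_image.mp hzt
      obtain ⟨y, hy, hyx⟩ := Finset.mem_image.mp hzs
      exact hdisj t s hts x hx (by rwa [← π.injective hyx])
    rcases consec_sep (hDint t).2 (hDint s).2 hd with h | h
    · exact Or.inl fun x hx y hy =>
        h _ (Finset.mem_image_of_mem π hx) _ (Finset.mem_image_of_mem π hy)
    · exact Or.inr fun x hx y hy =>
        h _ (Finset.mem_image_of_mem π hx) _ (Finset.mem_image_of_mem π hy)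
  refine ⟨σ, D, ⟨hDne, hDint, ?_, hpw, ?_⟩, fun t => hpat _ (hmemL t)⟩
  · intro x
    obtain ⟨S, hS, hxS⟩ := hcov x
    obtain ⟨t, ht⟩ := List.mem_iff_get.mp hS
    have hxt : x ∈ D t := by show x ∈ L.get t; rw [ht]; exact hxS
    refine ⟨t, hxt, fun s hs => ?_⟩
    by_contra hst
    exact hdisj s t hst x hs hxt
  · intro t s hts x hx y hy
    rcases hsep t s hts with h | h
    · have h1 : π ((D t).min' (hDne t)) < π ((D s).min' (hDne s)) :=
        h _ (Finset.min'_mem _ _) _ (Finset.min'_mem _ _)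
      exact iff_of_true ((hσ t s).mpr h1) (h x hx y hy)
    · have h1 : π ((D s).min' (hDne s)) < π ((D t).min' (hDne t)) :=
        h _ (Finset.min'_mem _ _) _ (Finset.min'_mem _ _)
      refine iff_of_false (fun hc => ?_) (fun hc => lt_asymm hc (h x hx y hy))
      exact lt_asymm h1 ((hσ t s).mp hc)

/-- the `Y`-profile `π^Y` (the shortest `Y`-deflation of `π`) is
involved in every `Y`-deflation `π'` of `π`. -/
theorem profile_involved_in_deflation (Y : Set PermS) (hY : IsPermClass Y)
    (h1 : (⟨1, 1⟩ : PermS) ∈ Y) {n m m' : ℕ} (π : Equiv.Perm (Fin n))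
    (πY : Equiv.Perm (Fin m)) (hdef : IsYDeflation Y πY π)
    (hmin : ∀ q : PermS, IsYDeflation Y q.2 π → m ≤ q.1)
    (π' : Equiv.Perm (Fin m')) (hdef' : IsYDeflation Y π' π) :
    Involves πY π' := by
  classical
  obtain ⟨Bb, hBinf, hBpat⟩ := hdef
  obtain ⟨Cb, hCinf, hCpat⟩ := hdef'
  rcases Nat.eq_zero_or_pos m with hm0 | hm
  · subst hm0
    exact ⟨fun a => a.elim0, fun a => a.elim0, fun a => a.elim0⟩
  have hBne := hBinf.1
  have hBint := hBinf.2.1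
  have hBex := hBinf.2.2.1
  have hBlt := hBinf.2.2.2.1
  have hBiff := hBinf.2.2.2.2
  have hCne := hCinf.1
  have hCint := hCinf.2.1
  have hCex := hCinf.2.2.1
  have hClt := hCinf.2.2.2.1
  have hCiff := hCinf.2.2.2.2
  choose bIdx hbmem using fun x => (hBex x).exists
  have hbuniq : ∀ (x : Fin n) (t : Fin m), x ∈ Bb t → t = bIdx x :=
    fun x t ht => (hBex x).unique ht (hbmem x)
  choose cIdx hcmem using fun x => (hCex x).exists
  have hcuniq : ∀ (x : Fin n) (j : Fin m'), x ∈ Cb j → j = cIdx x :=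
    fun x j hj => (hCex x).unique hj (hcmem x)
  have hcmono : ∀ x y : Fin n, x ≤ y → cIdx x ≤ cIdx y := by
    intro x y hxy
    by_contra h
    push_neg at h
    exact absurd (hClt _ _ h _ (hcmem y) _ (hcmem x)) (not_lt.mpr hxy)
  have hbmono : ∀ x y : Fin n, x ≤ y → bIdx x ≤ bIdx y := by
    intro x y hxy
    by_contra h
    push_neg at h
    exact absurd (hBlt _ _ h _ (hbmem y) _ (hbmem x)) (not_lt.mpr hxy)
  let Lo : Fin m → Fin n := fun t => (Bb t).min' (hBne t)
  let Hi : Fin m → Fin n := fun t => (Bb t).max' (hBne t)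
  have hLomem : ∀ t, Lo t ∈ Bb t := fun t => Finset.min'_mem _ _
  have hHimem : ∀ t, Hi t ∈ Bb t := fun t => Finset.max'_mem _ _
  have hLole : ∀ (t : Fin m), ∀ x ∈ Bb t, Lo t ≤ x := fun t x hx => Finset.min'_le _ _ hx
  have hHige : ∀ (t : Fin m), ∀ x ∈ Bb t, x ≤ Hi t := fun t x hx => Finset.le_max' _ _ hx
  have hmemB : ∀ (t : Fin m) (x : Fin n), Lo t ≤ x → x ≤ Hi t → x ∈ Bb t :=
    fun t x h1 h2 => (hBint t).1 (hLomem t) (hHimem t) h1 h2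
  have hLoHi : ∀ (l i : Fin m), l ≤ i → Lo l ≤ Hi i := by
    intro l i h
    rcases eq_or_lt_of_le h with rfl | h
    · exact hLole _ _ (hHimem _)
    · exact (hBlt _ _ h _ (hLomem _) _ (hHimem _)).le
  -- THE KEY COUNTING LEMMA
  have key : ∀ (d l i : ℕ) (hli : l ≤ i) (him : i < m), i - l = d →
      i - l ≤ (cIdx (Hi ⟨i, him⟩)).val - (cIdx (Lo ⟨l, by omega⟩)).val := by
    intro d
    induction d using Nat.strong_induction_on with
    | _ d IH =>
    intro l i hli him hd
    rcases Nat.eq_zero_or_pos d with rfl | hdpos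
    · omega
    have hli' : l < i := by omega
    by_contra hcon0
    push_neg at hcon0
    let lF : Fin m := ⟨l, by omega⟩
    let iF : Fin m := ⟨i, him⟩
    let l1F : Fin m := ⟨l + 1, by omega⟩
    let i1F : Fin m := ⟨i - 1, by omega⟩
    have hcon : (cIdx (Hi iF)).val - (cIdx (Lo lF)).val < i - l := hcon0
    have IH1 : i - (l+1) ≤ (cIdx (Hi iF)).val - (cIdx (Lo l1F)).val :=
      IH (d-1) (by omega) (l+1) i (by omega) him (by omega)
    have IH2 : (i-1) - l ≤ (cIdx (Hi i1F)).val - (cIdx (Lo lF)).val :=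
      IH (d-1) (by omega) l (i-1) (by omega) (by omega) (by omega)
    have hj01 : (cIdx (Lo lF)).val ≤ (cIdx (Lo l1F)).val :=
      hcmono _ _ (hBlt lF l1F (Fin.mk_lt_mk.mpr (by omega)) _ (hLomem _) _ (hLomem _)).le
    have hj02 : (cIdx (Lo l1F)).val ≤ (cIdx (Hi iF)).val :=
      hcmono _ _ (hLoHi l1F iF (Fin.mk_le_mk.mpr (by omega)))
    have hj0eq : cIdx (Lo l1F) = cIdx (Lo lF) := Fin.ext (by omega)
    have hi1 : (cIdx (Hi i1F)).val ≤ (cIdx (Hi iF)).val :=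
      hcmono _ _ ((hBlt i1F iF (Fin.mk_lt_mk.mpr (by omega)) _ (hHimem _) _ (hHimem _)).le)
    have hj12 : (cIdx (Lo lF)).val ≤ (cIdx (Hi i1F)).val :=
      hcmono _ _ (hLoHi lF i1F (Fin.mk_le_mk.mpr (by omega)))
    have hj1eq : cIdx (Hi i1F) = cIdx (Hi iF) := Fin.ext (by omega)
    set j0 := cIdx (Lo lF) with hj0def
    set j1 := cIdx (Hi iF) with hj1def
    have hsubBl : ∀ x ∈ Bb lF, x ∈ Cb j0 := by
      intro x hx
      have hc2 : Lo l1F ∈ Cb j0 := by rw [← hj0eq]; exact hcmem _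
      exact (hCint j0).1 (hcmem (Lo lF)) hc2 (hLole _ _ hx)
        (hBlt lF l1F (Fin.mk_lt_mk.mpr (by omega)) _ hx _ (hLomem _)).le
    have hsubBi : ∀ x ∈ Bb iF, x ∈ Cb j1 := by
      intro x hx
      have hc2 : Hi i1F ∈ Cb j1 := by rw [← hj1eq]; exact hcmem _
      exact (hCint j1).1 hc2 (hcmem (Hi iF))
        (hBlt i1F iF (Fin.mk_lt_mk.mpr (by omega)) _ (hHimem _) _ hx).le (hHige _ _ hx)
    have hj0j1 : j0 ≤ j1 := hcmono _ _ (hLoHi lF iF (Fin.mk_le_mk.mpr (by omega)))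
    let u := (Cb j0).min' (hCne j0)
    let v := (Cb j1).max' (hCne j1)
    let t0 := bIdx u
    let t1 := bIdx v
    have huB : u ∈ Bb t0 := hbmem u
    have hvB : v ∈ Bb t1 := hbmem v
    have huC : u ∈ Cb j0 := Finset.min'_mem _ _
    have hvC : v ∈ Cb j1 := Finset.max'_mem _ _
    have hule : u ≤ Lo lF := Finset.min'_le _ _ (hcmem (Lo lF))
    have hvge : Hi iF ≤ v := Finset.le_max' _ _ (hcmem (Hi iF))
    have ht0 : t0 ≤ lF := by
      have h := hbmono _ _ hule
      rwa [← hbuniq (Lo lF) lF (hLomem lF)] at h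
    have ht1 : iF ≤ t1 := by
      have h := hbmono _ _ hvge
      rwa [← hbuniq (Hi iF) iF (hHimem iF)] at h
    let P0 : Finset (Fin n) := Bb t0 \ Cb j0
    let P1 : Finset (Fin n) := Bb t1 \ Cb j1
    have hP0lt : ∀ x ∈ P0, x < u := by
      intro x hx
      rw [Finset.mem_sdiff] at hx
      by_contra h
      push_neg at h
      apply hx.2
      rcases eq_or_lt_of_le ht0 with heq | hlt
      · exact hsubBl x (heq ▸ hx.1)
      · have hxlt : x < Lo lF := hBlt t0 lF hlt _ hx.1 _ (hLomem _)
        exact (hCint j0).1 huC (hcmem (Lo lF)) h hxlt.le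
    have hP1gt : ∀ x ∈ P1, v < x := by
      intro x hx
      rw [Finset.mem_sdiff] at hx
      by_contra h
      push_neg at h
      apply hx.2
      rcases eq_or_lt_of_le ht1 with heq | hlt
      · exact hsubBi x (heq ▸ hx.1)
      · have hxgt : Hi iF < x := hBlt iF t1 hlt _ (hHimem _) _ hx.1
        exact (hCint j1).1 (hcmem (Hi iF)) hvC hxgt.le h
    have hP0ne : P0.Nonempty → t0 < lF := by
      rintro ⟨x, hx⟩
      rcases eq_or_lt_of_le ht0 with heq | hlt
      · exfalso
        rw [Finset.mem_sdiff] at hx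
        exact hx.2 (hsubBl x (heq ▸ hx.1))
      · exact hlt
    have hP1ne : P1.Nonempty → iF < t1 := by
      rintro ⟨x, hx⟩
      rcases eq_or_lt_of_le ht1 with heq | hlt
      · exfalso
        rw [Finset.mem_sdiff] at hx
        exact hx.2 (hsubBi x (heq ▸ hx.1))
      · exact hlt
    have hu_le : ∀ (j : Fin m') (y : Fin n), j0 ≤ j → y ∈ Cb j → u ≤ y := by
      intro j y hj hy
      rcases eq_or_lt_of_le hj with heq | hlt
      · rw [← heq] at hy; exact Finset.min'_le _ _ hy
      · exact (hClt _ _ hlt _ huC _ hy).le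
    have hv_ge : ∀ (j : Fin m') (y : Fin n), j ≤ j1 → y ∈ Cb j → y ≤ v := by
      intro j y hj hy
      rcases eq_or_lt_of_le hj with heq | hlt
      · rw [heq] at hy; exact Finset.le_max' _ _ hy
      · exact (hClt _ _ hlt _ hy _ hvC).le
    have huv : u ≤ v := le_trans hule (le_trans (hLoHi lF iF (Fin.mk_le_mk.mpr (by omega))) hvge)
    -- the shorter deflation
    have ht0v : t0.val ≤ l := ht0
    have ht1v : i ≤ t1.val := ht1
    have ht1m : t1.val < m := t1.isLt
    have hj0j1v : j0.val ≤ j1.val := hj0j1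
    have hj1m' : j1.val < m' := j1.isLt
    let F1 : Fin t0.val → Finset (Fin n) := fun s => Bb ⟨s.val, by have := s.isLt; omega⟩
    let F3 : Fin (j1.val - j0.val + 1) → Finset (Fin n) :=
      fun s => Cb ⟨j0.val + s.val, by have := s.isLt; omega⟩
    let F5 : Fin (m - 1 - t1.val) → Finset (Fin n) :=
      fun s => Bb ⟨t1.val + 1 + s.val, by have := s.isLt; omega⟩
    let L2 : List (Finset (Fin n)) := if P0.Nonempty then [P0] else []
    let L4 : List (Finset (Fin n)) := if P1.Nonempty then [P1] else []
    let L : List (Finset (Fin n)) :=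
      List.ofFn F1 ++ (L2 ++ (List.ofFn F3 ++ (L4 ++ List.ofFn F5)))
    have hP0subB : P0 ⊆ Bb t0 := Finset.sdiff_subset
    have hP1subB : P1 ⊆ Bb t1 := Finset.sdiff_subset
    have hmemL2 : ∀ S ∈ L2, S = P0 ∧ P0.Nonempty := by
      intro S hS
      by_cases hp : P0.Nonempty
      · simp only [L2, if_pos hp, List.mem_singleton] at hS; exact ⟨hS, hp⟩
      · simp [L2, if_neg hp] at hS
    have hmemL4 : ∀ S ∈ L4, S = P1 ∧ P1.Nonempty := by
      intro S hS
      by_cases hp : P1.Nonempty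
      · simp only [L4, if_pos hp, List.mem_singleton] at hS; exact ⟨hS, hp⟩
      · simp [L4, if_neg hp] at hS
    -- goodness of all blocks
    have hLgood : ∀ S ∈ L, S.Nonempty ∧ IsInterval π S ∧
        ∃ (k : ℕ) (α : Equiv.Perm (Fin k)), (⟨k, α⟩ : PermS) ∈ Y ∧ IsPatternOf α π S := by
      have hgoodP0 : P0.Nonempty → P0.Nonempty ∧ IsInterval π P0 ∧
          ∃ (k : ℕ) (α : Equiv.Perm (Fin k)), (⟨k, α⟩ : PermS) ∈ Y ∧ IsPatternOf α π P0 := by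
        intro hp
        have ht0l : t0 < lF := hP0ne hp
        have hwA : Lo lF ∉ Bb t0 := by
          intro hmem
          have h1 := hbuniq _ _ hmem
          have h2 := hbuniq _ _ (hLomem lF)
          exact absurd (h1.trans h2.symm) (ne_of_lt ht0l)
        obtain ⟨k, α, hkY, hkpat⟩ := hBpat t0
        exact ⟨hp, isInterval_sdiff π (hBint t0) (hCint j0) (hcmem (Lo lF)) hwA,
          pattern_mono hY π hP0subB hkpat hkY⟩
      have hgoodP1 : P1.Nonempty → P1.Nonempty ∧ IsInterval π P1 ∧
          ∃ (k : ℕ) (α : Equiv.Perm (Fin k)), (⟨k, α⟩ : PermS) ∈ Y ∧ IsPatternOf α π P1 := by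
        intro hp
        have ht1i : iF < t1 := hP1ne hp
        have hwA : Hi iF ∉ Bb t1 := by
          intro hmem
          have h1 := hbuniq _ _ hmem
          have h2 := hbuniq _ _ (hHimem iF)
          exact absurd (h2.trans h1.symm) (ne_of_lt ht1i)
        obtain ⟨k, α, hkY, hkpat⟩ := hBpat t1
        exact ⟨hp, isInterval_sdiff π (hBint t1) (hCint j1) (hcmem (Hi iF)) hwA,
          pattern_mono hY π hP1subB hkpat hkY⟩
      intro S hS
      simp only [L, List.mem_append] at hS
      rcases hS with hS | hS | hS | hS | hS
      · obtain ⟨s, rfl⟩ := List.mem_ofFn.mp hS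
        exact ⟨hBne _, hBint _, hBpat _⟩
      · obtain ⟨rfl, hp⟩ := hmemL2 S hS
        exact hgoodP0 hp
      · obtain ⟨s, rfl⟩ := List.mem_ofFn.mp hS
        exact ⟨hCne _, hCint _, hCpat _⟩
      · obtain ⟨rfl, hp⟩ := hmemL4 S hS
        exact hgoodP1 hp
      · obtain ⟨s, rfl⟩ := List.mem_ofFn.mp hS
        exact ⟨hBne _, hBint _, hBpat _⟩
    -- coverage
    have hcovL : ∀ x : Fin n, ∃ S ∈ L, x ∈ S := by
      intro x
      by_cases h1 : (bIdx x).val < t0.val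
      · refine ⟨Bb (bIdx x), ?_, hbmem x⟩
        simp only [L, List.mem_append]
        refine Or.inl (List.mem_ofFn.mpr ⟨⟨(bIdx x).val, h1⟩, ?_⟩)
        exact congrArg Bb (Fin.ext rfl)
      by_cases h2 : t1.val < (bIdx x).val
      · refine ⟨Bb (bIdx x), ?_, hbmem x⟩
        simp only [L, List.mem_append]
        have hx := (bIdx x).isLt
        refine Or.inr (Or.inr (Or.inr (Or.inr (List.mem_ofFn.mpr
          ⟨⟨(bIdx x).val - t1.val - 1, by omega⟩, ?_⟩))))
        exact congrArg Bb (Fin.ext (by simp; omega))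
      push_neg at h1 h2
      by_cases hj1x : (cIdx x).val < j0.val
      · -- x ∈ P0
        have hxu : x < u := hClt _ _ (Fin.lt_def.mpr hj1x) x (hcmem x) u huC
        have hteq : bIdx x = t0 := by
          rcases eq_or_lt_of_le (Fin.le_def.mpr h1) with heq | hlt
          · exact heq.symm
          · exact absurd hxu (not_lt.mpr (hBlt t0 _ hlt u huB x (hbmem x)).le)
        have hxP0 : x ∈ P0 := by
          refine Finset.mem_sdiff.mpr ⟨hteq ▸ hbmem x, fun hc => ?_⟩
          have := congrArg Fin.val (hcuniq x j0 hc)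
          omega
        refine ⟨P0, ?_, hxP0⟩
        simp only [L, List.mem_append]
        have hp : P0.Nonempty := ⟨x, hxP0⟩
        exact Or.inr (Or.inl (by simp [L2, hp]))
      by_cases hj2x : j1.val < (cIdx x).val
      · -- x ∈ P1
        have hxv : v < x := hClt _ _ (Fin.lt_def.mpr hj2x) v hvC x (hcmem x)
        have hteq : bIdx x = t1 := by
          rcases eq_or_lt_of_le (Fin.le_def.mpr h2) with heq | hlt
          · exact heq
          · exact absurd hxv (not_lt.mpr (hBlt _ t1 hlt x (hbmem x) v hvB).le)
        have hxP1 : x ∈ P1 := by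
          refine Finset.mem_sdiff.mpr ⟨hteq ▸ hbmem x, fun hc => ?_⟩
          have := congrArg Fin.val (hcuniq x j1 hc)
          omega
        refine ⟨P1, ?_, hxP1⟩
        simp only [L, List.mem_append]
        have hp : P1.Nonempty := ⟨x, hxP1⟩
        exact Or.inr (Or.inr (Or.inr (Or.inl (by simp [L4, hp]))))
      push_neg at hj1x hj2x
      · refine ⟨Cb (cIdx x), ?_, hcmem x⟩
        simp only [L, List.mem_append]
        refine Or.inr (Or.inr (Or.inl (List.mem_ofFn.mpr
          ⟨⟨(cIdx x).val - j0.val, by omega⟩, ?_⟩)))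
        exact congrArg Cb (Fin.ext (by simp; omega))
    -- orderedness
    have hordL : L.Pairwise (fun S T => ∀ x ∈ S, ∀ y ∈ T, x < y) := by
      have hb1 : ∀ (s : Fin t0.val), ∀ x ∈ F1 s, x < u :=
        fun s x hx => hBlt _ t0 (Fin.lt_def.mpr s.isLt) x hx u huB
      have hb3lo : ∀ (s : Fin (j1.val - j0.val + 1)), ∀ x ∈ F3 s, u ≤ x :=
        fun s x hx => hu_le _ x (Fin.le_def.mpr (by simp)) hx
      have hb3hi : ∀ (s : Fin (j1.val - j0.val + 1)), ∀ x ∈ F3 s, x ≤ v :=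
        fun s x hx => hv_ge _ x (Fin.le_def.mpr (by have := s.isLt; simp; omega)) hx
      have hb5 : ∀ (s : Fin (m - 1 - t1.val)), ∀ x ∈ F5 s, v < x :=
        fun s x hx => hBlt t1 _ (Fin.lt_def.mpr (by simp; omega)) v hvB x hx
      have hpw1 : (List.ofFn F1).Pairwise (fun S T => ∀ x ∈ S, ∀ y ∈ T, x < y) :=
        List.pairwise_ofFn.mpr (fun s s' hss => fun x hx y hy =>
          hBlt _ _ (Fin.mk_lt_mk.mpr hss) x hx y hy)
      have hpw3 : (List.ofFn F3).Pairwise (fun S T => ∀ x ∈ S, ∀ y ∈ T, x < y) :=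
        List.pairwise_ofFn.mpr (fun s s' hss => fun x hx y hy =>
          hClt _ _ (Fin.mk_lt_mk.mpr (by have : s.val < s'.val := hss; omega)) x hx y hy)
      have hpw5 : (List.ofFn F5).Pairwise (fun S T => ∀ x ∈ S, ∀ y ∈ T, x < y) :=
        List.pairwise_ofFn.mpr (fun s s' hss => fun x hx y hy =>
          hBlt _ _ (Fin.mk_lt_mk.mpr (by have : s.val < s'.val := hss; omega)) x hx y hy)
      have hpw2 : L2.Pairwise (fun S T => ∀ x ∈ S, ∀ y ∈ T, x < y) := by
        by_cases hp : P0.Nonempty <;> simp [L2, hp]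
      have hpw4 : L4.Pairwise (fun S T => ∀ x ∈ S, ∀ y ∈ T, x < y) := by
        by_cases hp : P1.Nonempty <;> simp [L4, hp]
      refine List.pairwise_append.mpr ⟨hpw1, List.pairwise_append.mpr ⟨hpw2,
        List.pairwise_append.mpr ⟨hpw3, List.pairwise_append.mpr ⟨hpw4, hpw5, ?_⟩, ?_⟩, ?_⟩, ?_⟩
      · -- L4 vs F5
        intro a ha b hb x hx y hy
        obtain ⟨rfl, _⟩ := hmemL4 a ha
        obtain ⟨s, rfl⟩ := List.mem_ofFn.mp hb
        exact hBlt t1 _ (Fin.lt_def.mpr (by simp; omega)) x (hP1subB hx) y hy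
      · -- F3 vs (L4 ++ F5)
        intro a ha b hb x hx y hy
        obtain ⟨s, rfl⟩ := List.mem_ofFn.mp ha
        have hxv : x ≤ v := hb3hi s x hx
        rcases List.mem_append.mp hb with hb | hb
        · obtain ⟨rfl, _⟩ := hmemL4 b hb
          exact lt_of_le_of_lt hxv (hP1gt y hy)
        · obtain ⟨s', rfl⟩ := List.mem_ofFn.mp hb
          exact lt_of_le_of_lt hxv (hb5 s' y hy)
      · -- L2 vs (F3 ++ L4 ++ F5)
        intro a ha b hb x hx y hy
        obtain ⟨rfl, _⟩ := hmemL2 a ha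
        have hxu : x < u := hP0lt x hx
        rcases List.mem_append.mp hb with hb | hb
        · obtain ⟨s, rfl⟩ := List.mem_ofFn.mp hb
          exact lt_of_lt_of_le hxu (hb3lo s y hy)
        rcases List.mem_append.mp hb with hb | hb
        · obtain ⟨rfl, _⟩ := hmemL4 b hb
          exact lt_of_lt_of_le hxu (le_trans huv (hP1gt y hy).le)
        · obtain ⟨s', rfl⟩ := List.mem_ofFn.mp hb
          exact lt_of_lt_of_le hxu (le_trans huv (hb5 s' y hy).le)
      · -- F1 vs rest
        intro a ha b hb x hx y hy
        obtain ⟨s, rfl⟩ := List.mem_ofFn.mp ha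
        have hxu : x < u := hb1 s x hx
        rcases List.mem_append.mp hb with hb | hb
        · obtain ⟨rfl, _⟩ := hmemL2 b hb
          exact hBlt _ t0 (Fin.lt_def.mpr s.isLt) x hx y (hP0subB hy)
        rcases List.mem_append.mp hb with hb | hb
        · obtain ⟨s', rfl⟩ := List.mem_ofFn.mp hb
          exact lt_of_lt_of_le hxu (hb3lo s' y hy)
        rcases List.mem_append.mp hb with hb | hb
        · obtain ⟨rfl, _⟩ := hmemL4 b hb
          exact lt_of_lt_of_le hxu (le_trans huv (hP1gt y hy).le)
        · obtain ⟨s', rfl⟩ := List.mem_ofFn.mp hb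
          exact lt_of_lt_of_le hxu (le_trans huv (hb5 s' y hy).le)
    obtain ⟨σ, hσ⟩ := exists_perm_of_list Y π L (fun S hS => (hLgood S hS).1)
      (fun S hS => (hLgood S hS).2.1) (fun S hS => (hLgood S hS).2.2) hordL hcovL
    have hlen : m ≤ L.length := hmin ⟨L.length, σ⟩ hσ
    have hLlen : L.length =
        t0.val + (L2.length + ((j1.val - j0.val + 1) + (L4.length + (m - 1 - t1.val)))) := by
      simp [L, List.length_append, List.length_ofFn]
      omega
    have hP0v : P0.Nonempty → t0.val < l := fun hp => hP0ne hp
    have hP1v : P1.Nonempty → i < t1.val := fun hp => hP1ne hp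
    by_cases hp0 : P0.Nonempty <;> by_cases hp1 : P1.Nonempty
    · have e2 : L2.length = 1 := by simp [L2, hp0]
      have e4 : L4.length = 1 := by simp [L4, hp1]
      have := hP0v hp0; have := hP1v hp1
      omega
    · have e2 : L2.length = 1 := by simp [L2, hp0]
      have e4 : L4.length = 0 := by simp [L4, hp1]
      have := hP0v hp0
      omega
    · have e2 : L2.length = 0 := by simp [L2, hp0]
      have e4 : L4.length = 1 := by simp [L4, hp1]
      have := hP1v hp1
      omega
    · have e2 : L2.length = 0 := by simp [L2, hp0]
      have e4 : L4.length = 0 := by simp [L4, hp1]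
      omega
  -- build the matching
  have hL1 : ∀ (l i : Fin m), l ≤ i → (i.val - l.val) ≤ (cIdx (Hi i)).val - (cIdx (Lo l)).val :=
    fun l i h => key (i.val - l.val) l.val i.val h i.isLt rfl
  let Si : Fin m → Finset ℕ := fun i =>
    (Finset.Iic i).image (fun l => (cIdx (Lo l)).val + (i.val - l.val))
  have hSine : ∀ i, (Si i).Nonempty :=
    fun i => ⟨_, Finset.mem_image_of_mem _ (Finset.mem_Iic.mpr (le_refl i))⟩
  have hSibound : ∀ (i : Fin m), ∀ a ∈ Si i, a ≤ (cIdx (Hi i)).val := by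
    intro i a ha
    obtain ⟨l, hl, rfl⟩ := Finset.mem_image.mp ha
    have h0 := Finset.mem_Iic.mp hl
    have h1 := hL1 l i h0
    have h2 : (cIdx (Lo l)).val ≤ (cIdx (Hi i)).val := hcmono _ _ (hLoHi l i h0)
    have h3 : l.val ≤ i.val := h0
    omega
  let f : Fin m → Fin m' := fun i =>
    ⟨(Si i).max' (hSine i), lt_of_le_of_lt (Finset.max'_le _ (hSine i) _ (hSibound i))
      (cIdx (Hi i)).isLt⟩
  have hflow : ∀ i : Fin m, (cIdx (Lo i)).val ≤ (Si i).max' (hSine i) := by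
    intro i
    have hmem : (cIdx (Lo i)).val + (i.val - i.val) ∈ Si i :=
      Finset.mem_image_of_mem _ (Finset.mem_Iic.mpr (le_refl i))
    have h2 := Finset.le_max' _ _ hmem
    omega
  have hfhigh : ∀ i : Fin m, (Si i).max' (hSine i) ≤ (cIdx (Hi i)).val :=
    fun i => Finset.max'_le _ (hSine i) _ (hSibound i)
  have hfmono' : ∀ i i' : Fin m, i < i' → (Si i).max' (hSine i) < (Si i').max' (hSine i') := by
    intro i i' hii
    rw [Finset.max'_lt_iff]
    intro a ha
    obtain ⟨l, hl, rfl⟩ := Finset.mem_image.mp ha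
    have hl0 : l ≤ i := Finset.mem_Iic.mp hl
    have hl' : l ≤ i' := le_trans hl0 hii.le
    have hmem : (cIdx (Lo l)).val + (i'.val - l.val) ∈ Si i' :=
      Finset.mem_image_of_mem _ (Finset.mem_Iic.mpr hl')
    have h3 := Finset.le_max' _ _ hmem
    have h4 : i.val < i'.val := hii
    have h5 : l.val ≤ i.val := hl0
    omega
  have hfmono : StrictMono f := fun i i' h => Fin.lt_def.mpr (hfmono' i i' h)
  have hmeet : ∀ i : Fin m, ∃ x, x ∈ Bb i ∧ x ∈ Cb (f i) := by
    intro i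
    have h01 : cIdx (Lo i) ≤ f i := Fin.le_def.mpr (hflow i)
    have h02 : f i ≤ cIdx (Hi i) := Fin.le_def.mpr (hfhigh i)

    rcases eq_or_lt_of_le h01 with heq | hlt
    · exact ⟨Lo i, hLomem i, by rw [← heq]; exact hcmem (Lo i)⟩
    · have hw1 : Lo i < (Cb (f i)).min' (hCne (f i)) :=
        hClt _ _ hlt _ (hcmem (Lo i)) _ (Finset.min'_mem _ _)
      have hw2 : (Cb (f i)).min' (hCne (f i)) ≤ Hi i := by
        rcases eq_or_lt_of_le h02 with heq2 | hlt2
        · rw [heq2]; exact Finset.min'_le _ _ (hcmem (Hi i))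
        · exact (hClt _ _ hlt2 _ (Finset.min'_mem _ _) _ (hcmem (Hi i))).le
      exact ⟨_, hmemB i _ hw1.le hw2, Finset.min'_mem _ _⟩
  refine ⟨f, hfmono, fun a b => ?_⟩
  rcases eq_or_ne a b with rfl | hab
  · exact iff_of_false (lt_irrefl _) (lt_irrefl _)
  · obtain ⟨x, hxB, hxC⟩ := hmeet a
    obtain ⟨y, hyB, hyC⟩ := hmeet b
    have hfab : f a ≠ f b := fun h => hab (hfmono.injective h)
    exact (hBiff a b hab x hxB y hyB).trans (hCiff (f a) (f b) hfab x hxC y hyC).symm
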